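/- Fix integers m ≥ 1 and d ≥ 1, and let L_{m,d} ⊂ ℝ^m be the lattice of points (q₁ + k/d, …, q_m + k/d) with q₁,…,q_m ∈ ℤ and k ∈ {0,…,d−1}. Then for any a ∈ ℝ^m and any ε with 0 < ε < 1/(2d), there exist an integer n with 1 ≤ n ≤ ⌈1/(d ε^m)⌉ and a point p ∈ L_{m,d} such that |n·aᵢ − pᵢ| < ε for all i = 1,…,m. -/

import Mathlib

/-- The lattice `L_{m,d} ⊂ ℝ^m` of points `(q₁ + k/d, …, q_m + k/d)` with
`qᵢ ∈ ℤ` and `k ∈ {0,…,d−1}`. -/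
def latticeLmd (m d : ℕ) : Set (Fin m → ℝ) :=
  {x | ∃ (q : Fin m → ℤ) (k : ℕ), k < d ∧ ∀ i, x i = (q i : ℝ) + (k : ℝ) / d}

open MeasureTheory Set Submodule Pointwise

/-- The matrix whose columns generate the lattice. -/
noncomputable def dirichletMat (m d : ℕ) : Matrix (Fin (m+1)) (Fin (m+1)) ℝ :=
  Matrix.of fun i j => if j = Fin.last m then (1:ℝ)/d else if i = j then 1 else 0

lemma dirichletMat_det (m d : ℕ) : (dirichletMat m d).det = 1/d := by
  rw [Matrix.det_of_upperTriangular]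
  · rw [Fintype.prod_eq_single (Fin.last m)]
    · simp [dirichletMat]
    · intro i hi; simp [dirichletMat, hi, Fin.ne_of_lt (Fin.lt_last_iff_ne_last.mpr hi)]
  · intro i j hij
    have h1 : j ≠ Fin.last m := by
      intro h; subst h; exact absurd hij (by simp [Fin.le_last, not_lt, id])
    have h2 : ¬ (i = j) := fun h => by simp [h, id] at hij
    simp [dirichletMat, h1, h2]

lemma latticeLmd_small (m d : ℕ) (hd : 1 ≤ d) (x : Fin (m+1) → ℝ)
    (hx : x ∈ latticeLmd (m+1) d) (hsmall : ∀ i, |x i| < 1/d) : x = 0 := by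
  have hd0 : (0:ℝ) < d := by positivity
  obtain ⟨q, k, hk, hq⟩ := hx
  rcases Nat.eq_zero_or_pos k with hk0 | hk1
  · subst hk0
    have hq0 : ∀ i, q i = 0 := by
      intro i
      have h1 : |x i| < 1 := lt_of_lt_of_le (hsmall i) (by
        rw [div_le_one hd0]; exact_mod_cast hd)
      have h2 : |(q i : ℝ)| < 1 := by
        have := hq i; simp at this; rwa [this] at h1
      have h3 : |q i| < 1 := by exact_mod_cast h2
      rw [abs_lt] at h3; omega
    funext i
    simp [hq i, hq0 i]
  · exfalso
    set i₀ : Fin (m+1) := 0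
    have hv := hsmall i₀
    rw [hq i₀, abs_lt] at hv
    obtain ⟨hv1, hv2⟩ := hv
    have hK1 : (1:ℝ) ≤ (k:ℝ) := by exact_mod_cast hk1
    have hK2 : (k:ℝ) ≤ (d:ℝ) - 1 := by
      have h' : (k:ℝ) ≤ ((d-1 : ℕ):ℝ) := by exact_mod_cast (by omega : k ≤ d - 1)
      rwa [Nat.cast_sub hd, Nat.cast_one] at h'
    rcases le_or_gt 0 (q i₀) with hQ | hQ
    · have hQ' : (0:ℝ) ≤ (q i₀ : ℝ) := by exact_mod_cast hQ
      have h5 : (1:ℝ)/d ≤ (k:ℝ)/d := by gcongr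
      linarith
    · have hQ' : ((q i₀ : ℤ):ℝ) ≤ -1 := by exact_mod_cast (by omega : q i₀ ≤ -1)
      have h5 : (k:ℝ)/d ≤ ((d:ℝ)-1)/d := by gcongr
      have h6 : ((d:ℝ)-1)/d = 1 - 1/d := by field_simp
      linarith

lemma span_subset_lattice (m d : ℕ) (hd : 1 ≤ d)
    (b : Module.Basis (Fin (m+1)) ℝ (Fin (m+1) → ℝ))
    (hb : ∀ j i, b j i = dirichletMat m d i j) :
    ∀ x ∈ span ℤ (Set.range ⇑b), x ∈ latticeLmd (m+1) d := by
  have hd0 : (0:ℝ) < d := by positivity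
  intro x hx
  rw [mem_span_range_iff_exists_fun] at hx
  obtain ⟨c, hc⟩ := hx
  set cl := c (Fin.last m) with hcl
  have hxi : ∀ i, x i =
      ((if i = Fin.last m then 0 else c i : ℤ) : ℝ) + (cl : ℝ)/d := by
    intro i
    have h0 := congrFun hc i
    rw [Finset.sum_apply] at h0
    rw [← h0]
    have h1 : ∀ j, (c j • b j) i
        = if j = Fin.last m then (c j : ℝ)/d else if i = j then (c j : ℝ) else 0 := by
      intro j
      rcases eq_or_ne j (Fin.last m) with h | h
      · simp [h, hb, dirichletMat, div_eq_mul_inv]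
      · rcases eq_or_ne i j with h2 | h2
        · simp [h, h2, hb, dirichletMat, h2 ▸ h]
        · simp [h, h2, hb, dirichletMat, Ne.symm h2]
    simp only [h1]
    rw [Fintype.sum_eq_add_sum_compl (Fin.last m)]
    simp only [if_pos rfl]
    have h3 : ∀ j ∈ ({Fin.last m}ᶜ : Finset (Fin (m+1))),
        (if j = Fin.last m then (c j : ℝ)/d else if i = j then (c j : ℝ) else 0)
          = if i = j then (c i : ℝ) else 0 := by
      intro j hj
      rw [Finset.mem_compl, Finset.mem_singleton] at hj
      rw [if_neg hj]
      rcases eq_or_ne i j with h4 | h4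
      · simp [h4]
      · simp [h4]
    rw [Finset.sum_congr rfl h3, Finset.sum_ite_eq]
    rcases eq_or_ne i (Fin.last m) with h5 | h5
    · simp [h5, hcl]
    · simp [h5]
      ring
  refine ⟨fun i => (if i = Fin.last m then 0 else c i) + cl / d, (cl % d).toNat, ?_, ?_⟩
  · have hdz : (d:ℤ) ≠ 0 := by exact_mod_cast (by omega : d ≠ 0)
    have h1 : 0 ≤ cl % d := Int.emod_nonneg _ hdz
    have h2 : cl % d < d := Int.emod_lt_of_pos _ (by exact_mod_cast (by omega : 0 < d))
    omega
  · intro i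
    have h1 : 0 ≤ cl % d := Int.emod_nonneg _ (by exact_mod_cast (by omega : d ≠ 0))
    have h3 : (((cl % d).toNat : ℕ) : ℝ) = ((cl % d : ℤ) : ℝ) := by
      exact_mod_cast Int.toNat_of_nonneg h1
    have h4 : ((d:ℤ) * (cl / d) + cl % d : ℤ) = cl := Int.mul_ediv_add_emod cl d
    have h5 : (cl : ℝ) = (d:ℝ) * ((cl / d : ℤ) : ℝ) + ((cl % d : ℤ) : ℝ) := by
      exact_mod_cast h4.symm
    rw [hxi i]
    push_cast
    rw [h3]
    rcases eq_or_ne i (Fin.last m) with h6 | h6 <;>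
      simp only [h6, if_pos, if_neg, ite_true, ite_false, if_true, if_false] <;>
      field_simp <;> linarith [h5]

theorem dirichlet_lattice_aux (m d : ℕ) (hd : 1 ≤ d)
    (a : Fin (m+1) → ℝ) (ε : ℝ) (hε : 0 < ε) (hε' : ε < 1 / (2 * d)) :
    ∃ n : ℕ, 1 ≤ n ∧ (n : ℝ) ≤ ⌈1 / (d * ε ^ (m+1))⌉₊ ∧
      ∃ p ∈ latticeLmd (m+1) d, ∀ i, |(n : ℝ) * a i - p i| < ε := by
  classical
  have hd0 : (0:ℝ) < d := by positivity
  have hεd : ε < 1/d := lt_of_lt_of_le hε' (by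
    rw [div_le_div_iff₀ (by positivity) hd0]; nlinarith)
  have hdet : (dirichletMat m d).det = 1/d := dirichletMat_det m d
  have hinv : Invertible (dirichletMat m d) := (dirichletMat m d).invertibleOfIsUnitDet
    (by rw [hdet]; exact isUnit_iff_ne_zero.mpr (by positivity))
  set b : Module.Basis (Fin (m+1)) ℝ (Fin (m+1) → ℝ) :=
    (Pi.basisFun ℝ (Fin (m+1))).map ((dirichletMat m d).toLinearEquiv' hinv) with hbdef
  have hb : ∀ j i, b j i = dirichletMat m d i j := by
    intro j i
    simp [hbdef, Matrix.toLinearEquiv', Matrix.toLin'_apply, Matrix.mulVec_single]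
  set F := ZSpan.fundamentalDomain b with hFdef
  have hF : volume F = ENNReal.ofReal (1/d) := by
    rw [hFdef, ZSpan.volume_fundamentalDomain]
    congr 1
    have h : (Matrix.of ⇑b) = (dirichletMat m d).transpose := by ext i j; exact hb i j
    rw [h, Matrix.det_transpose, hdet, abs_of_nonneg (by positivity)]
  letI : Countable (span ℤ (Set.range ⇑b)).toAddSubgroup :=
    inferInstanceAs (Countable (span ℤ (Set.range ⇑b)))
  have hfd := ZSpan.isAddFundamentalDomain' b (volume : Measure (Fin (m+1) → ℝ))
  have hFmeas : MeasurableSet F := ZSpan.fundamentalDomain_measurableSet b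
  set N := ⌈1 / ((d:ℝ) * ε ^ (m+1))⌉₊ with hNdef
  set t : ℕ → Set (Fin (m+1) → ℝ) := fun n =>
    Set.univ.pi fun i => Ioo ((n:ℝ) * a i - ε/2) ((n:ℝ) * a i + ε/2) with htdef
  have ht_meas : ∀ n, MeasurableSet (t n) := fun n =>
    MeasurableSet.univ_pi fun i => measurableSet_Ioo
  have ht_vol : ∀ n, volume (t n) = ENNReal.ofReal (ε ^ (m+1)) := by
    intro n
    rw [htdef]
    rw [volume_pi_pi]
    simp only [Real.volume_Ioo]
    have h : ∀ i : Fin (m+1), (n:ℝ) * a i + ε/2 - ((n:ℝ) * a i - ε/2) = ε := fun i => by ring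
    simp_rw [h]
    rw [Finset.prod_const, ← ENNReal.ofReal_pow hε.le]
    simp
  set s : ℕ → Set (Fin (m+1) → ℝ) := fun n =>
    ⋃ γ : (span ℤ (Set.range ⇑b)).toAddSubgroup, (γ +ᵥ t n) ∩ F with hsdef
  have hsub : ∀ n, s n ⊆ F := fun n => iUnion_subset fun γ => inter_subset_right
  have hdisjoint : ∀ n, Pairwise (Function.onFun Disjoint
      fun γ : (span ℤ (Set.range ⇑b)).toAddSubgroup => (γ +ᵥ t n) ∩ F) := by
    intro n γ1 γ2 hne
    refine Set.disjoint_left.mpr fun z hz1 hz2 => hne ?_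
    obtain ⟨u1, hu1, hu1z⟩ := Set.mem_vadd_set.mp hz1.1
    obtain ⟨u2, hu2, hu2z⟩ := Set.mem_vadd_set.mp hz2.1
    have e1 : (γ1 : Fin (m+1) → ℝ) + u1 = z := hu1z
    have e2 : (γ2 : Fin (m+1) → ℝ) + u2 = z := hu2z
    have hmem : ((γ1 : Fin (m+1) → ℝ) - (γ2 : Fin (m+1) → ℝ)) ∈ latticeLmd (m+1) d :=
      span_subset_lattice m d hd b hb _ (sub_mem γ1.2 γ2.2)
    have hzero : (γ1 : Fin (m+1) → ℝ) - (γ2 : Fin (m+1) → ℝ) = 0 := by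
      refine latticeLmd_small m d hd _ hmem fun i => ?_
      have hc1 := mem_Ioo.mp (hu1 i (mem_univ i))
      have hc2 := mem_Ioo.mp (hu2 i (mem_univ i))
      have g1 : (γ1 : Fin (m+1) → ℝ) i = z i - u1 i := by
        have := congrFun e1 i; simp only [Pi.add_apply] at this; linarith
      have g2 : (γ2 : Fin (m+1) → ℝ) i = z i - u2 i := by
        have := congrFun e2 i; simp only [Pi.add_apply] at this; linarith
      have : ((γ1 : Fin (m+1) → ℝ) - (γ2 : Fin (m+1) → ℝ)) i = u2 i - u1 i := by
        simp only [Pi.sub_apply, g1, g2]; ring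
      rw [this, abs_lt]
      constructor <;> linarith
    have : (γ1 : Fin (m+1) → ℝ) = (γ2 : Fin (m+1) → ℝ) := by
      have := sub_eq_zero.mp hzero; exact this
    exact Subtype.ext this
  have hs_meas : ∀ n, MeasurableSet (s n) := fun n =>
    MeasurableSet.iUnion fun γ => ((ht_meas n).const_vadd _).inter hFmeas
  have hs_vol : ∀ n, volume (s n) = ENNReal.ofReal (ε ^ (m+1)) := by
    intro n
    rw [hsdef]
    rw [measure_iUnion (hdisjoint n) (fun γ => ((ht_meas n).const_vadd _).inter hFmeas)]
    rw [← hfd.measure_eq_tsum (t n)]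
    exact ht_vol n
  have hεm : (0:ℝ) < ε ^ (m+1) := by positivity
  have hreal : 1/(d:ℝ) < ((N:ℝ) + 1) * ε ^ (m+1) := by
    have hc : (1 / ((d:ℝ) * ε ^ (m+1))) ≤ (N:ℝ) := Nat.le_ceil _
    have h1 : 1/(d:ℝ) = (1 / ((d:ℝ) * ε ^ (m+1))) * ε ^ (m+1) := by
      field_simp
    have h2 := mul_le_mul_of_nonneg_right hc hεm.le
    nlinarith
  obtain ⟨n1, n2, hne, z, hz1, hz2⟩ :=
    exists_nonempty_inter_of_measure_univ_lt_tsum_measure (volume.restrict F)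
      (s := fun n : Fin (N+1) => s n)
      (fun n => ((hs_meas n).nullMeasurableSet)) (by
        rw [Measure.restrict_apply_univ, hF]
        have h1 : ∀ n : Fin (N+1), (volume.restrict F) (s n)
            = ENNReal.ofReal (ε ^ (m+1)) := by
          intro n
          rw [Measure.restrict_apply (hs_meas n),
            inter_eq_self_of_subset_left (hsub n), hs_vol]
        rw [tsum_congr h1, tsum_fintype]
        simp only [Finset.sum_const, Finset.card_univ, Fintype.card_fin, nsmul_eq_mul]
        rw [← ENNReal.ofReal_natCast (N+1), ← ENNReal.ofReal_mul (by positivity)]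
        refine (ENNReal.ofReal_lt_ofReal_iff (by positivity)).mpr ?_
        push_cast
        linarith)
  have main : ∀ n1 n2 : Fin (N+1), (n1:ℕ) < (n2:ℕ) → z ∈ s n1 → z ∈ s n2 →
      ∃ n : ℕ, 1 ≤ n ∧ (n : ℝ) ≤ ⌈1 / (d * ε ^ (m+1))⌉₊ ∧
        ∃ p ∈ latticeLmd (m+1) d, ∀ i, |(n : ℝ) * a i - p i| < ε := by
    intro n1 n2 hlt hzn1 hzn2
    rw [hsdef, mem_iUnion] at hzn1 hzn2
    obtain ⟨γ1, hγ1⟩ := hzn1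
    obtain ⟨γ2, hγ2⟩ := hzn2
    obtain ⟨u1, hu1, hu1z⟩ := Set.mem_vadd_set.mp hγ1.1
    obtain ⟨u2, hu2, hu2z⟩ := Set.mem_vadd_set.mp hγ2.1
    have e1 : (γ1 : Fin (m+1) → ℝ) + u1 = z := hu1z
    have e2 : (γ2 : Fin (m+1) → ℝ) + u2 = z := hu2z
    refine ⟨(n2:ℕ) - (n1:ℕ), by omega, ?_, ?_⟩
    · have h2 : (n2:ℕ) - (n1:ℕ) ≤ N := by omega
      exact_mod_cast Nat.cast_le.mpr h2
    · refine ⟨(γ1 : Fin (m+1) → ℝ) - (γ2 : Fin (m+1) → ℝ),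
        span_subset_lattice m d hd b hb _ (sub_mem γ1.2 γ2.2), fun i => ?_⟩
      have hc1 := mem_Ioo.mp (hu1 i (mem_univ i))
      have hc2 := mem_Ioo.mp (hu2 i (mem_univ i))
      have g1 : (γ1 : Fin (m+1) → ℝ) i = z i - u1 i := by
        have := congrFun e1 i; simp only [Pi.add_apply] at this; linarith
      have g2 : (γ2 : Fin (m+1) → ℝ) i = z i - u2 i := by
        have := congrFun e2 i; simp only [Pi.add_apply] at this; linarith
      have hcast : (((n2:ℕ) - (n1:ℕ) : ℕ) : ℝ) = ((n2:ℕ):ℝ) - ((n1:ℕ):ℝ) := by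
        rw [Nat.cast_sub hlt.le]
      have hval : (((n2:ℕ) - (n1:ℕ) : ℕ) : ℝ) * a i
          - ((γ1 : Fin (m+1) → ℝ) - (γ2 : Fin (m+1) → ℝ)) i
          = (((n2:ℕ):ℝ) * a i - u2 i) + (u1 i - ((n1:ℕ):ℝ) * a i) := by
        rw [hcast]
        simp only [Pi.sub_apply, g1, g2]
        ring
      rw [hval, abs_lt]
      constructor <;> linarith
  rcases Nat.lt_or_ge (n1:ℕ) (n2:ℕ) with h | h
  · exact main n1 n2 h hz1 hz2
  · have h' : (n2:ℕ) < (n1:ℕ) := by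
      rcases Nat.lt_or_ge (n2:ℕ) (n1:ℕ) with h2 | h2
      · exact h2
      · exact absurd (Fin.ext (le_antisymm h2 h)) hne
    exact main n2 n1 h' hz2 hz1

theorem dirichlet_lattice (m d : ℕ) (hm : 1 ≤ m) (hd : 1 ≤ d)
    (a : Fin m → ℝ) (ε : ℝ) (hε : 0 < ε) (hε' : ε < 1 / (2 * d)) :
    ∃ n : ℕ, 1 ≤ n ∧ (n : ℝ) ≤ ⌈1 / (d * ε ^ m)⌉₊ ∧
      ∃ p ∈ latticeLmd m d, ∀ i, |(n : ℝ) * a i - p i| < ε := by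
  obtain ⟨m', rfl⟩ : ∃ m', m = m' + 1 := ⟨m - 1, by omega⟩
  exact dirichlet_lattice_aux m' d hd a ε hε hε'
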